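/- For any symbol S of odd defect d = 2δ+1, the rank of the core symbol S_δ = ((0,1,...,2δ), ∅) satisfies rk(S_δ) = δ(δ+1), and rk(S_δ) ≤ rk(S), with equality if and only if S equals S_δ (up to shift). -/

import Mathlib

/-- A symbol consists of two strictly increasing finite sequences of nonnegative integers. -/
def IsSymbol (X Y : List ℕ) : Prop := X.Chain' (· < ·) ∧ Y.Chain' (· < ·)

/-- The shift operation on a symbol: prepend `0` and add `1` to every entry, in each row. -/
def shiftS (S : List ℕ × List ℕ) : List ℕ × List ℕ :=
  (0 :: S.1.map (· + 1), 0 :: S.2.map (· + 1))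

/-- The rank of a symbol: the sum of all entries minus `⌊(#S - 1)^2 / 4⌋`. -/
def rkS (S : List ℕ × List ℕ) : ℤ :=
  (S.1.sum + S.2.sum : ℤ) - ((S.1.length + S.2.length : ℤ) - 1) ^ 2 / 4

/-- The defect of a symbol: `#X - #Y`. -/
def defectS (S : List ℕ × List ℕ) : ℤ := (S.1.length : ℤ) - S.2.length

/-- Shift-equivalence of symbols: the equivalence relation generated by `S ∼ shift S`. -/
def symEquiv : List ℕ × List ℕ → List ℕ × List ℕ → Prop :=
  Relation.EqvGen (fun S T => T = shiftS S)

/-- The core symbol `S_δ = ((0, 1, …, 2δ), ∅)`. -/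
def coreSymbol (δ : ℕ) : List ℕ × List ℕ := (List.range (2 * δ + 1), [])

lemma sum_map_add_one (l : List ℕ) : (l.map (· + 1)).sum = l.sum + l.length := by
  induction l with
  | nil => simp
  | cons a t ih => simp [ih]; omega

lemma rk_shift (S : List ℕ × List ℕ) : rkS (shiftS S) = rkS S := by
  obtain ⟨X, Y⟩ := S
  simp only [rkS, shiftS, List.sum_cons, sum_map_add_one, List.length_cons, List.length_map]
  push_cast
  have h4 : ((X.length : ℤ) + 1 + ((Y.length : ℤ) + 1) - 1) ^ 2
      = ((X.length : ℤ) + (Y.length : ℤ) - 1) ^ 2 + ((X.length : ℤ) + Y.length) * 4 := by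
    ring
  rw [h4, Int.add_mul_ediv_right _ _ (by norm_num : (4:ℤ) ≠ 0)]
  ring

lemma rk_eqv {S T : List ℕ × List ℕ} (h : symEquiv S T) : rkS S = rkS T := by
  induction h with
  | rel a b hab => rw [hab, rk_shift]
  | refl => rfl
  | symm _ _ _ ih => exact ih.symm
  | trans _ _ _ _ _ ih1 ih2 => exact ih1.trans ih2

lemma two_mul_sum_range (n : ℕ) : 2 * (List.range n).sum = n * (n - 1) := by
  induction n with
  | zero => simp
  | succ n ih =>
    rw [List.range_succ, List.sum_append]
    simp only [List.sum_cons, List.sum_nil, Nat.succ_sub_one]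
    cases n with
    | zero => simp
    | succ k =>
      simp only [Nat.succ_sub_one] at ih
      have h1 : (k + 1 + 1) * (k + 1) = (k + 1) * k + 2 * (k + 1) := by ring
      omega

lemma sum_lb (l : List ℕ) : ∀ k : ℕ, l.Pairwise (· < ·) → (∀ x ∈ l, k ≤ x) →
    k * l.length + (List.range l.length).sum ≤ l.sum ∧
    (l.sum = k * l.length + (List.range l.length).sum → l = (List.range l.length).map (· + k)) := by
  induction l with
  | nil => intro k _ _; simp
  | cons a t ih =>
    intro k hp hk
    have hpt : t.Pairwise (· < ·) := (List.pairwise_cons.1 hp).2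
    have hat : ∀ x ∈ t, a < x := (List.pairwise_cons.1 hp).1
    have hka : k ≤ a := hk a List.mem_cons_self
    obtain ⟨h1, h2⟩ := ih (a + 1) hpt (fun x hx => hat x hx)
    set n := t.length with hn
    have hlen : (a :: t).length = n + 1 := by simp [hn]
    have hrs : (List.range (n + 1)).sum = (List.range n).sum + n := by
      rw [List.range_succ, List.sum_append]; simp
    have e1 : (a + 1) * n = a * n + n := by ring
    have e2 : k * (n + 1) = k * n + k := by ring
    have e3 : k * n ≤ a * n := Nat.mul_le_mul_right n hka
    rw [e1] at h1
    constructor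
    · rw [hlen, hrs, List.sum_cons]
      omega
    · intro heq
      rw [hlen, hrs] at heq
      simp only [List.sum_cons] at heq
      have hak : a = k := by omega
      subst hak
      have hts : t.sum = (a + 1) * n + (List.range n).sum := by
        rw [e1]; omega
      have ht := h2 hts
      rw [hlen, List.range_succ_eq_map, List.map_cons, List.map_map]
      rw [ht]
      congr 1
      · omega
      · apply List.map_congr_left
        intro i _
        simp [Function.comp, Nat.succ_eq_add_one]
        omega

lemma eqv_core (δ n : ℕ) :
    symEquiv (List.range (2 * δ + 1 + n), List.range n) (coreSymbol δ) := by
  induction n with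
  | zero =>
    have h : (List.range (2 * δ + 1 + 0), List.range 0) = coreSymbol δ := by
      simp [coreSymbol]
    rw [h]
    exact Relation.EqvGen.refl _
  | succ n ih =>
    refine Relation.EqvGen.trans _ _ _ ?_ ih
    apply Relation.EqvGen.symm
    apply Relation.EqvGen.rel
    show (List.range (2 * δ + 1 + (n + 1)), List.range (n + 1))
        = shiftS (List.range (2 * δ + 1 + n), List.range n)
    have key : ∀ m : ℕ, List.range (m + 1) = 0 :: (List.range m).map (· + 1) := by
      intro m
      rw [List.range_succ_eq_map]
    simp only [shiftS]
    refine Prod.ext ?_ ?_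
    · show List.range (2 * δ + 1 + (n + 1)) = 0 :: (List.range (2 * δ + 1 + n)).map (· + 1)
      rw [show 2 * δ + 1 + (n + 1) = (2 * δ + 1 + n) + 1 from rfl, key]
    · exact key n

lemma sum_range_eq (δ : ℕ) : (List.range (2 * δ + 1)).sum = 2 * δ * δ + δ := by
  have h2 := two_mul_sum_range (2 * δ + 1)
  have h3 : (2 * δ + 1) * (2 * δ + 1 - 1) = 2 * (2 * δ * δ + δ) := by
    simp only [Nat.add_sub_cancel]
    ring
  omega

lemma rk_core (δ : ℕ) : rkS (coreSymbol δ) = (δ : ℤ) * (δ + 1) := by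
  simp only [rkS, coreSymbol, List.sum_nil, List.length_nil, List.length_range,
    sum_range_eq]
  have hd : (((2 * δ + 1 : ℕ) : ℤ) + ((0 : ℕ) : ℤ) - 1) ^ 2 / 4 = (δ : ℤ) ^ 2 := by
    have h : (((2 * δ + 1 : ℕ) : ℤ) + ((0 : ℕ) : ℤ) - 1) ^ 2 = (δ : ℤ) ^ 2 * 4 := by
      push_cast; ring
    rw [h, Int.mul_ediv_cancel _ (by norm_num)]
  rw [hd]
  push_cast
  ring

/-- for any symbol `S` of odd defect `d = 2δ+1`, the core symbol
`S_δ = ((0,…,2δ), ∅)` has rank `δ(δ+1)`, and `rk(S_δ) ≤ rk(S)`, with equality if and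
only if `S` equals `S_δ` up to shift. -/
theorem core_rank_minimal (δ : ℕ) :
    rkS (coreSymbol δ) = (δ : ℤ) * (δ + 1) ∧
    ∀ X Y : List ℕ, IsSymbol X Y → defectS (X, Y) = 2 * (δ : ℤ) + 1 →
      rkS (coreSymbol δ) ≤ rkS (X, Y) ∧
      (rkS (X, Y) = rkS (coreSymbol δ) ↔ symEquiv (X, Y) (coreSymbol δ)) := by
  refine ⟨rk_core δ, ?_⟩
  intro X Y ⟨hX, hY⟩ hd
  have hXp : X.Pairwise (· < ·) := List.isChain_iff_pairwise.1 hX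
  have hYp : Y.Pairwise (· < ·) := List.isChain_iff_pairwise.1 hY
  have hm : X.length = Y.length + (2 * δ + 1) := by
    simp only [defectS] at hd; omega
  obtain ⟨hX1, hX2⟩ := sum_lb X 0 hXp (fun x _ => Nat.zero_le x)
  obtain ⟨hY1, hY2⟩ := sum_lb Y 0 hYp (fun x _ => Nat.zero_le x)
  simp only [Nat.zero_mul, Nat.zero_add] at hX1 hX2 hY1 hY2
  set n := Y.length with hn
  -- the floor term is exact
  have hdiv : ((X.length : ℤ) + (Y.length : ℤ) - 1) ^ 2 / 4 = ((n : ℤ) + δ) ^ 2 := by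
    have h : ((X.length : ℤ) + (Y.length : ℤ) - 1) ^ 2 = ((n : ℤ) + δ) ^ 2 * 4 := by
      rw [hm]; push_cast; ring
    rw [h, Int.mul_ediv_cancel _ (by norm_num)]
  have hrk : rkS (X, Y) = (X.sum : ℤ) + Y.sum - ((n : ℤ) + δ) ^ 2 := by
    simp only [rkS]
    rw [hdiv]
  -- sums of ranges, in ℕ then ℤ
  have hRm2 : 2 * (List.range X.length).sum = (n + 2 * δ + 1) * (n + 2 * δ) := by
    rw [two_mul_sum_range, hm]
    congr 1
  have hRn2 : 2 * (List.range n).sum + n = n * n := by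
    have h := two_mul_sum_range n
    have h2 : n * (n - 1) + n = n * n := by
      cases n with
      | zero => simp
      | succ k => simp only [Nat.succ_sub_one]; ring
    omega
  have hRmZ : 2 * ((List.range X.length).sum : ℤ) = ((n : ℤ) + 2 * δ + 1) * ((n : ℤ) + 2 * δ) := by
    exact_mod_cast hRm2
  have hRnZ : 2 * ((List.range n).sum : ℤ) + n = (n : ℤ) * n := by
    exact_mod_cast hRn2
  have hXsum : ((List.range X.length).sum : ℤ) ≤ (X.sum : ℤ) := by exact_mod_cast hX1
  have hYsum : ((List.range n).sum : ℤ) ≤ (Y.sum : ℤ) := by exact_mod_cast hY1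
  have key : ((n : ℤ) + 2 * δ + 1) * ((n : ℤ) + 2 * δ) + ((n : ℤ) * n - n)
      = 2 * ((δ : ℤ) * (δ + 1)) + 2 * ((n : ℤ) + δ) ^ 2 := by ring
  have hineq : rkS (coreSymbol δ) ≤ rkS (X, Y) := by
    rw [rk_core δ, hrk]
    linarith [hXsum, hYsum, hRmZ, hRnZ, key]
  refine ⟨hineq, ?_, ?_⟩
  · -- equality → symEquiv
    intro heq
    rw [hrk, rk_core δ] at heq
    have hXe : ((List.range X.length).sum : ℤ) = (X.sum : ℤ) := by
      linarith [hXsum, hYsum, hRmZ, hRnZ, key]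
    have hYe : ((List.range n).sum : ℤ) = (Y.sum : ℤ) := by
      linarith [hXsum, hYsum, hRmZ, hRnZ, key]
    have hXe' : X.sum = (List.range X.length).sum := by exact_mod_cast hXe.symm
    have hYe' : Y.sum = (List.range n).sum := by exact_mod_cast hYe.symm
    have hXr := hX2 hXe'
    have hYr := hY2 hYe'
    simp only [Nat.add_zero, List.map_id'] at hXr hYr
    have hlen' : X.length = 2 * δ + 1 + n := by omega
    have hXr' : X = List.range (2 * δ + 1 + n) := by
      rw [hXr, hlen']
    have hYr' : Y = List.range n := by rw [hYr]
    rw [hXr', hYr']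
    exact eqv_core δ n
  · -- symEquiv → equality
    intro heqv
    rw [rk_eqv heqv]
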